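/- Let C be a k-coalgebra with comultiplication Δ and counit ε, and let T be the forgetful functor from finite-dimensional right C-comodules to finite-dimensional vector spaces. Regard C as a realization of Coend(T) via i_X(β ⊗ x) = β(x_(0))x_(1). Then the coalgebra structure (Δ_C, ε_C) induced on C by the universal property of Coend(T) (from the comatrix coalgebra structures on the Hom_k(X,X)) coincides with the original coalgebra structure (Δ, ε) of C. In particular Coend(T) ≅ C as coalgebras. -/

import Mathlib

/- STATEMENT 7: for a k-coalgebra C, regarded as a realization of the coend of
the forgetful functor on finite-dimensional right C-comodules via
i_X(β ⊗ x) = β(x₍₀₎)x₍₁₎, the coalgebra structure induced on C by the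
universal property (from the comatrix coalgebras on the Hom_k(X,X)) coincides
with the original (Δ, ε); in particular Coend(T) ≅ C as coalgebras. -/

open TensorProduct

noncomputable section
variable (k : Type) [Field k]

def smulRightL {M : Type} [AddCommGroup M] [Module k M] (x : M) :
    (M →ₗ[k] k) →ₗ[k] (M →ₗ[k] M) where
  toFun f := f.smulRight x
  map_add' f g := by ext y; simp [add_smul]
  map_smul' c f := by ext y; simp [smul_smul]

/-- The comatrix comultiplication on `Hom_k(M,M)` for finite-dimensional `M`:
`Δ(β ⊗ x) = Σ_i (β ⊗ x_i) ⊗ (x^i ⊗ x)`.  Its counit is the trace. -/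
def comatrixComul (M : Type) [AddCommGroup M] [Module k M] [Module.Finite k M] :
    (M →ₗ[k] M) →ₗ[k] ((M →ₗ[k] M) ⊗[k] (M →ₗ[k] M)) :=
  let b := Module.Free.chooseBasis k M
  ∑ i, ∑ l,
    ((TensorProduct.mk k (M →ₗ[k] M) (M →ₗ[k] M)).flip ((b.coord l).smulRight (b i))) ∘ₗ
      (smulRightL k (b l)) ∘ₗ (LinearMap.llcomp k M M k (b.coord i))

variable (C : Type) [AddCommGroup C] [Module k C] [Coalgebra k C]

structure FdComod where
  carrier : Type
  [ab : AddCommGroup carrier]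
  [mod : Module k carrier]
  [fin : FiniteDimensional k carrier]
  ρ : carrier →ₗ[k] carrier ⊗[k] C
  coassoc : (TensorProduct.assoc k carrier C C).toLinearMap ∘ₗ
      (TensorProduct.map ρ LinearMap.id) ∘ₗ ρ
      = (TensorProduct.map LinearMap.id Coalgebra.comul) ∘ₗ ρ
  counit : (TensorProduct.map LinearMap.id Coalgebra.counit) ∘ₗ ρ
      = (TensorProduct.rid k carrier).symm.toLinearMap

attribute [instance] FdComod.ab FdComod.mod FdComod.fin

/-- The canonical maps `i_X : Hom_k(X,X) → C`, `β ⊗ x ↦ β(x₍₀₎)x₍₁₎`. -/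
def canI (X : FdComod k C) : (X.carrier →ₗ[k] X.carrier) →ₗ[k] C :=
  let b := Module.Free.chooseBasis k X.carrier
  ∑ j, ((TensorProduct.lid k C).toLinearMap ∘ₗ
          TensorProduct.map (b.coord j) LinearMap.id ∘ₗ X.ρ) ∘ₗ
        (LinearMap.applyₗ (b j) : (X.carrier →ₗ[k] X.carrier) →ₗ[k] X.carrier)

namespace CoendAux

open TensorProduct LinearMap Module.Free

variable {k : Type} [Field k]

/-- Expand an element of `M ⊗ N` along a finite basis of `M`. -/
lemma expand_left {M N : Type} [AddCommGroup M] [Module k M] [AddCommGroup N] [Module k N]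
    {ι : Type} [Fintype ι] (b : Module.Basis ι k M) (z : M ⊗[k] N) :
    z = ∑ j, b j ⊗ₜ[k]
      (TensorProduct.lid k N (TensorProduct.map (b.coord j) LinearMap.id z)) := by
  induction z using TensorProduct.induction_on with
  | zero => simp
  | tmul m n =>
      conv_lhs => rw [← Module.Basis.sum_repr b m]
      rw [sum_tmul]
      refine Finset.sum_congr rfl fun j _ => ?_
      simp [smul_tmul, Module.Basis.coord_apply]
  | add x y hx hy =>
      conv_lhs => rw [hx, hy]
      simp [tmul_add, ← Finset.sum_add_distrib]

/-- Expand an element of `M ⊗ N` along a finite basis of `N`. -/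
lemma expand_right {M N : Type} [AddCommGroup M] [Module k M] [AddCommGroup N] [Module k N]
    {ι : Type} [Fintype ι] (b : Module.Basis ι k N) (z : M ⊗[k] N) :
    z = ∑ j,
      (TensorProduct.rid k M (TensorProduct.map LinearMap.id (b.coord j) z)) ⊗ₜ[k] b j := by
  induction z using TensorProduct.induction_on with
  | zero => simp
  | tmul m n =>
      conv_lhs => rw [← Module.Basis.sum_repr b n]
      rw [tmul_sum]
      refine Finset.sum_congr rfl fun j _ => ?_
      simp [tmul_smul, smul_tmul', Module.Basis.coord_apply]
  | add x y hx hy =>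
      conv_lhs => rw [hx, hy]
      simp [add_tmul, ← Finset.sum_add_distrib]


variable {C : Type} [AddCommGroup C] [Module k C] [Coalgebra k C]

/-- `ev β x = β(x₍₀₎) x₍₁₎`. -/
def ev (X : FdComod k C) (β : X.carrier →ₗ[k] k) : X.carrier →ₗ[k] C :=
  (TensorProduct.lid k C).toLinearMap ∘ₗ TensorProduct.map β LinearMap.id ∘ₗ X.ρ

/-- `ev` as a linear map in `β`. -/
def evB (X : FdComod k C) : (X.carrier →ₗ[k] k) →ₗ[k] (X.carrier →ₗ[k] C) where
  toFun := ev X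
  map_add' β γ := by ext x; simp [ev, TensorProduct.map_add_left]
  map_smul' c β := by ext x; simp [ev, TensorProduct.map_smul_left]

lemma canI_apply (X : FdComod k C) (f : X.carrier →ₗ[k] X.carrier) :
    canI k C X f
      = ∑ j, ev X ((chooseBasis k X.carrier).coord j) (f (chooseBasis k X.carrier j)) := by
  simp [canI, ev]

lemma canI_smulRight (X : FdComod k C) (β : X.carrier →ₗ[k] k) (x : X.carrier) :
    canI k C X (β.smulRight x) = ev X β x := by
  set b := chooseBasis k X.carrier with hb
  rw [canI_apply]
  have h1 : ∀ j, ev X (b.coord j) ((β.smulRight x) (b j))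
      = β (b j) • ev X (b.coord j) x := fun j => by
    rw [LinearMap.smulRight_apply, map_smul]
  rw [Finset.sum_congr rfl fun j _ => h1 j]
  have h2 : ∑ j, β (b j) • ev X (b.coord j) x
      = (evB X (∑ j, β (b j) • b.coord j)) x := by
    rw [map_sum, LinearMap.sum_apply]
    exact Finset.sum_congr rfl fun j _ => by rw [map_smul]; rfl
  rw [h2, Module.Basis.sum_dual_apply_smul_coord]
  rfl

lemma counit_ev (X : FdComod k C) (β : X.carrier →ₗ[k] k) (x : X.carrier) :
    Coalgebra.counit (ev X β x) = β x := by
  have h1 : ((Coalgebra.counit : C →ₗ[k] k) ∘ₗ (TensorProduct.lid k C).toLinearMap ∘ₗ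
        TensorProduct.map β LinearMap.id)
      = β ∘ₗ (TensorProduct.rid k X.carrier).toLinearMap ∘ₗ
        TensorProduct.map LinearMap.id Coalgebra.counit := by
    apply TensorProduct.ext'
    intro m c
    simp [mul_comm, TensorProduct.smul_tmul']
  have h2 := LinearMap.congr_fun h1 (X.ρ x)
  have h3 := LinearMap.congr_fun X.counit x
  simp only [LinearMap.comp_apply, LinearEquiv.coe_coe] at h2 h3
  simp only [ev, LinearMap.comp_apply, LinearEquiv.coe_coe]
  rw [h2, h3]
  simp

lemma comul_ev (X : FdComod k C) (β : X.carrier →ₗ[k] k) (x : X.carrier) :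
    Coalgebra.comul (ev X β x)
      = ∑ l, ev X β (chooseBasis k X.carrier l) ⊗ₜ[k]
          ev X ((chooseBasis k X.carrier).coord l) x := by
  set b := chooseBasis k X.carrier with hb
  have hA : ((Coalgebra.comul : C →ₗ[k] C ⊗[k] C) ∘ₗ (TensorProduct.lid k C).toLinearMap ∘ₗ
        TensorProduct.map β LinearMap.id)
      = ((TensorProduct.lid k (C ⊗[k] C)).toLinearMap ∘ₗ TensorProduct.map β LinearMap.id) ∘ₗ
        TensorProduct.map LinearMap.id Coalgebra.comul := by
    apply TensorProduct.ext'; intro m c; simp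
  have hM : ((TensorProduct.lid k (C ⊗[k] C)).toLinearMap ∘ₗ TensorProduct.map β LinearMap.id) ∘ₗ
        (TensorProduct.assoc k X.carrier C C).toLinearMap
      = TensorProduct.map
          ((TensorProduct.lid k C).toLinearMap ∘ₗ TensorProduct.map β LinearMap.id)
          LinearMap.id := by
    apply TensorProduct.ext_threefold; intro m c d; simp [TensorProduct.smul_tmul']
  have hco := LinearMap.congr_fun X.coassoc x
  simp only [LinearMap.comp_apply, LinearEquiv.coe_coe] at hco
  have hexp : X.ρ x = ∑ l, b l ⊗ₜ[k] ev X (b.coord l) x := by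
    conv_lhs => rw [expand_left b (X.ρ x)]
    rfl
  calc Coalgebra.comul (ev X β x)
      = ((TensorProduct.lid k (C ⊗[k] C)).toLinearMap ∘ₗ TensorProduct.map β LinearMap.id)
          (TensorProduct.map LinearMap.id Coalgebra.comul (X.ρ x)) := by
        have := LinearMap.congr_fun hA (X.ρ x)
        simpa [ev, LinearMap.comp_apply] using this
    _ = ((TensorProduct.lid k (C ⊗[k] C)).toLinearMap ∘ₗ TensorProduct.map β LinearMap.id)
          ((TensorProduct.assoc k X.carrier C C)
            (TensorProduct.map X.ρ LinearMap.id (X.ρ x))) := by rw [hco]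
    _ = TensorProduct.map
          ((TensorProduct.lid k C).toLinearMap ∘ₗ TensorProduct.map β LinearMap.id)
          LinearMap.id (TensorProduct.map X.ρ LinearMap.id (X.ρ x)) := by
        have := LinearMap.congr_fun hM (TensorProduct.map X.ρ LinearMap.id (X.ρ x))
        simpa [LinearMap.comp_apply] using this
    _ = ∑ l, ev X β (b l) ⊗ₜ[k] ev X (b.coord l) x := by
        conv_lhs => rw [hexp]
        rw [map_sum, map_sum]
        refine Finset.sum_congr rfl fun l _ => ?_
        simp [ev]

lemma smulRight_sum {M N : Type} [AddCommGroup M] [Module k M] [AddCommGroup N] [Module k N]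
    (f : M →ₗ[k] k) {ι : Type} (s : Finset ι) (v : ι → N) :
    f.smulRight (∑ i ∈ s, v i) = ∑ i ∈ s, f.smulRight (v i) := by
  ext z; simp [Finset.smul_sum]

lemma smulRight_smul_left {M N : Type} [AddCommGroup M] [Module k M] [AddCommGroup N]
    [Module k N] (c : k) (f : M →ₗ[k] k) (x : N) :
    (c • f).smulRight x = c • f.smulRight x := by
  ext z
  simp only [LinearMap.smulRight_apply, LinearMap.smul_apply, smul_eq_mul, mul_smul]

lemma smulRight_smul_right {M N : Type} [AddCommGroup M] [Module k M] [AddCommGroup N]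
    [Module k N] (c : k) (f : M →ₗ[k] k) (x : N) :
    f.smulRight (c • x) = c • f.smulRight x := by
  ext z
  simp only [LinearMap.smulRight_apply, LinearMap.smul_apply]
  rw [smul_comm]

lemma comatrixComul_smulRight (M : Type) [AddCommGroup M] [Module k M] [Module.Finite k M]
    (β : M →ₗ[k] k) (x : M) :
    comatrixComul k M (β.smulRight x)
      = ∑ l, (β.smulRight (chooseBasis k M l)) ⊗ₜ[k]
          (((chooseBasis k M).coord l).smulRight x) := by
  set b := chooseBasis k M with hb
  have hunf : comatrixComul k M (β.smulRight x)
      = ∑ i, ∑ l, ((b.coord i ∘ₗ β.smulRight x).smulRight (b l)) ⊗ₜ[k]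
          ((b.coord l).smulRight (b i)) := by
    simp only [comatrixComul, smulRightL, LinearMap.sum_apply, LinearMap.comp_apply,
      LinearMap.llcomp_apply', LinearMap.coe_mk, AddHom.coe_mk, LinearMap.flip_apply,
      TensorProduct.mk_apply]
    rfl
  rw [hunf, Finset.sum_comm]
  refine Finset.sum_congr rfl fun l _ => ?_
  have hcoord : ∀ i, (b.coord i ∘ₗ β.smulRight x) = b.repr x i • β := by
    intro i; ext y
    simp [Module.Basis.coord_apply, mul_comm]
  calc ∑ i, ((b.coord i ∘ₗ β.smulRight x).smulRight (b l)) ⊗ₜ[k] ((b.coord l).smulRight (b i))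
      = ∑ i, (β.smulRight (b l)) ⊗ₜ[k] ((b.coord l).smulRight (b.repr x i • b i)) := by
        refine Finset.sum_congr rfl fun i _ => ?_
        rw [hcoord i, smulRight_smul_left, smul_tmul, ← smulRight_smul_right]
    _ = (β.smulRight (b l)) ⊗ₜ[k] ((b.coord l).smulRight x) := by
        rw [← tmul_sum, ← smulRight_sum, Module.Basis.sum_repr]

lemma endo_decomp {M : Type} [AddCommGroup M] [Module k M] [Module.Finite k M]
    (f : M →ₗ[k] M) :
    f = ∑ i, ((chooseBasis k M).coord i).smulRight (f (chooseBasis k M i)) := by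
  ext y
  simp only [LinearMap.sum_apply, LinearMap.smulRight_apply, Module.Basis.coord_apply]
  simp_rw [← map_smul, ← map_sum, Module.Basis.sum_repr]
lemma part1 (X : FdComod k C) :
    Coalgebra.comul ∘ₗ canI k C X
      = (TensorProduct.map (canI k C X) (canI k C X)) ∘ₗ comatrixComul k X.carrier := by
  ext f
  simp only [LinearMap.comp_apply]
  conv_lhs => rw [endo_decomp f]
  conv_rhs => rw [endo_decomp f]
  rw [map_sum, map_sum, map_sum, map_sum]
  refine Finset.sum_congr rfl fun i _ => ?_
  rw [canI_smulRight, comul_ev, comatrixComul_smulRight, map_sum]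
  refine Finset.sum_congr rfl fun l _ => ?_
  rw [TensorProduct.map_tmul, canI_smulRight, canI_smulRight]

lemma part2 (X : FdComod k C) :
    (Coalgebra.counit : C →ₗ[k] k) ∘ₗ canI k C X = LinearMap.trace k X.carrier := by
  ext f
  simp only [LinearMap.comp_apply]
  rw [canI_apply, map_sum]
  simp_rw [counit_ev]
  rw [LinearMap.trace_eq_matrix_trace k (chooseBasis k X.carrier), Matrix.trace]
  simp [LinearMap.toMatrix_apply, Module.Basis.coord_apply, Matrix.diag]
open Submodule in
lemma exists_subcomodule (c : C) :
    ∃ W : Submodule k C, Module.Finite k W ∧ c ∈ W ∧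
      ∀ w : W, Coalgebra.comul (w : C) ∈
        LinearMap.range (TensorProduct.map W.subtype (LinearMap.id : C →ₗ[k] C)) := by
  obtain ⟨s, hs⟩ := TensorProduct.exists_finset (R := k) (Coalgebra.comul c)
  set Y : Submodule k C := span k (Prod.snd '' (s : Set (C × C))) with hY
  have hYfin : Module.Finite k Y :=
    Module.Finite.span_of_finite k (s.finite_toSet.image _)
  haveI := hYfin
  obtain ⟨z, hzz⟩ : ∃ z : C ⊗[k] Y,
      TensorProduct.map LinearMap.id Y.subtype z = Coalgebra.comul c := by
    refine ⟨∑ i ∈ s.attach, i.1.1 ⊗ₜ[k]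
      (⟨i.1.2, subset_span (Set.mem_image_of_mem Prod.snd (Finset.mem_coe.mpr i.2))⟩ : Y), ?_⟩
    rw [map_sum, hs, ← Finset.sum_attach s (fun p => p.1 ⊗ₜ[k] p.2)]
    exact Finset.sum_congr rfl fun i _ => by simp
  set d := chooseBasis k Y with hd
  set x : ChooseBasisIndex k Y → C := fun j =>
    TensorProduct.rid k C (TensorProduct.map LinearMap.id (d.coord j) z) with hx
  have hzexp : z = ∑ j, x j ⊗ₜ[k] d j := expand_right d z
  have hΔc : Coalgebra.comul c = ∑ j, x j ⊗ₜ[k] (d j : C) := by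
    rw [← hzz]
    conv_lhs => rw [hzexp]
    rw [map_sum]
    simp
  set W : Submodule k C := span k (insert c (Set.range x)) with hW
  have hWfin : Module.Finite k W :=
    Module.Finite.span_of_finite k ((Set.finite_range x).insert c)
  have hcW : c ∈ W := subset_span (Set.mem_insert _ _)
  have hxW : ∀ j, x j ∈ W := fun j => subset_span (Set.mem_insert_of_mem _ ⟨j, rfl⟩)
  set R := LinearMap.range (TensorProduct.map W.subtype (LinearMap.id : C →ₗ[k] C)) with hR
  have hRtm : ∀ (u : C), u ∈ W → ∀ (t : C), u ⊗ₜ[k] t ∈ R := fun u hu t =>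
    ⟨(⟨u, hu⟩ : W) ⊗ₜ[k] t, by simp⟩
  obtain ⟨Y', hY'⟩ := Submodule.exists_isCompl Y
  set π := Y.linearProjOfIsCompl Y' hY' with hπ
  set δ : ChooseBasisIndex k Y → (C →ₗ[k] k) := fun j => (d.coord j) ∘ₗ π with hδdef
  have hδ : ∀ j l, δ j ((d l : C)) = if l = j then 1 else 0 := by
    intro j l
    simp [hδdef, hπ, Submodule.linearProjOfIsCompl, Submodule.linearProjOfIsCompl_apply_left, Module.Basis.coord_apply,
      Module.Basis.repr_self, Finsupp.single_apply]
  set q : ChooseBasisIndex k Y → (C ⊗[k] C →ₗ[k] C) := fun j =>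
    (TensorProduct.rid k C).toLinearMap ∘ₗ TensorProduct.map LinearMap.id (δ j) with hq
  have hco := Coalgebra.coassoc_apply (R := k) c
  have hL : (Coalgebra.comul (R := k)).rTensor C (Coalgebra.comul c)
      = ∑ l, Coalgebra.comul (x l) ⊗ₜ[k] (d l : C) := by
    rw [hΔc, map_sum]
    simp [LinearMap.rTensor_tmul]
  have hRt : (Coalgebra.comul (R := k)).lTensor C (Coalgebra.comul c)
      = ∑ l, x l ⊗ₜ[k] Coalgebra.comul (d l : C) := by
    rw [hΔc, map_sum]
    simp [LinearMap.lTensor_tmul]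
  have hkey : ∑ l, Coalgebra.comul (x l) ⊗ₜ[k] (d l : C)
      = (TensorProduct.assoc k C C C).symm (∑ l, x l ⊗ₜ[k] Coalgebra.comul (d l : C)) := by
    rw [← hL, ← hRt, ← hco]
    simp
  set F : ChooseBasisIndex k Y → ((C ⊗[k] C) ⊗[k] C →ₗ[k] C ⊗[k] C) := fun j =>
    (TensorProduct.rid k (C ⊗[k] C)).toLinearMap ∘ₗ TensorProduct.map LinearMap.id (δ j)
    with hF
  have hF1 : ∀ j, F j (∑ l, Coalgebra.comul (x l) ⊗ₜ[k] (d l : C)) = Coalgebra.comul (x j) := by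
    intro j
    rw [map_sum]
    have h' : ∀ l, F j (Coalgebra.comul (x l) ⊗ₜ[k] (d l : C))
        = (if l = j then (1 : k) else 0) • Coalgebra.comul (x l) := by
      intro l; simp [hF, hδ]
    rw [Finset.sum_congr rfl fun l _ => h' l]
    simp [ite_smul, Finset.sum_ite_eq']
  have hF2 : ∀ j w, F j ((TensorProduct.assoc k C C C).symm w)
      = TensorProduct.map LinearMap.id (q j) w := by
    intro j w
    have h' : F j = TensorProduct.map LinearMap.id (q j) ∘ₗ
        (TensorProduct.assoc k C C C).toLinearMap := by
      apply TensorProduct.ext_threefold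
      intro a u v
      simp [hF, hq, TensorProduct.smul_tmul', TensorProduct.tmul_smul]
    rw [h']
    simp
  have hΔx : ∀ j, Coalgebra.comul (x j) ∈ R := by
    intro j
    rw [← hF1 j, hkey, hF2, map_sum]
    refine Submodule.sum_mem _ fun l _ => ?_
    have h' : TensorProduct.map LinearMap.id (q j) (x l ⊗ₜ[k] Coalgebra.comul (d l : C))
        = x l ⊗ₜ[k] (q j (Coalgebra.comul (d l : C))) := by simp
    rw [h']
    exact hRtm _ (hxW l) _
  have hgen : ∀ w ∈ W, Coalgebra.comul w ∈ R := by
    intro w hw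
    refine Submodule.span_induction ?_ ?_ ?_ ?_ hw
    · intro u hu
      rcases Set.mem_insert_iff.mp hu with h | ⟨j, rfl⟩
      · subst h
        rw [hΔc]
        exact Submodule.sum_mem _ fun l _ => hRtm _ (hxW l) _
      · exact hΔx j
    · simp
    · intro a b _ _ ha hb
      rw [map_add]; exact add_mem ha hb
    · intro r a _ ha
      rw [map_smul]; exact Submodule.smul_mem _ _ ha
  exact ⟨W, hWfin, hcW, fun w => hgen w w.2⟩

lemma exists_rep (c : C) :
    ∃ (X : FdComod k C) (f : X.carrier →ₗ[k] X.carrier), canI k C X f = c := by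
  obtain ⟨W, hfin, hcW, hcomul⟩ := exists_subcomodule (k := k) (C := C) c
  haveI : Module.Finite k W := hfin
  set J := TensorProduct.map W.subtype (LinearMap.id : C →ₗ[k] C) with hJ
  have hJinj : Function.Injective J :=
    Module.Flat.rTensor_preserves_injective_linearMap (M := C) W.subtype W.injective_subtype
  set e := LinearEquiv.ofInjective J hJinj with he
  set g : W →ₗ[k] LinearMap.range J :=
    LinearMap.codRestrict _ (Coalgebra.comul ∘ₗ W.subtype) (fun w => hcomul w) with hg
  set ρ : W →ₗ[k] (W : Type) ⊗[k] C := e.symm.toLinearMap ∘ₗ g with hρ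
  have hJρ : ∀ w : W, J (ρ w) = Coalgebra.comul (w : C) := by
    intro w
    have h1 : J (e.symm (g w)) = ((g w : LinearMap.range J) : C ⊗[k] C) := by
      conv_rhs => rw [← e.apply_symm_apply (g w)]
      exact (LinearEquiv.ofInjective_apply J (e.symm (g w))).symm
    have h2 : ((g w : LinearMap.range J) : C ⊗[k] C) = Coalgebra.comul (w : C) := by
      simp [hg]
      rfl
    rw [hρ]
    simpa [LinearMap.comp_apply] using h1.trans h2
  have hJρcomp : J ∘ₗ ρ = Coalgebra.comul ∘ₗ W.subtype := LinearMap.ext hJρ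
  have hcoassoc : (TensorProduct.assoc k W C C).toLinearMap ∘ₗ
      (TensorProduct.map ρ LinearMap.id) ∘ₗ ρ
      = (TensorProduct.map LinearMap.id Coalgebra.comul) ∘ₗ ρ := by
    have hJ2inj : Function.Injective
        (TensorProduct.map W.subtype (LinearMap.id : C ⊗[k] C →ₗ[k] C ⊗[k] C)) :=
      Module.Flat.rTensor_preserves_injective_linearMap (M := C ⊗[k] C)
        W.subtype W.injective_subtype
    apply LinearMap.ext
    intro w
    apply hJ2inj
    have lhs₁ : TensorProduct.map W.subtype (LinearMap.id : C ⊗[k] C →ₗ[k] C ⊗[k] C)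
          ((TensorProduct.assoc k W C C) (TensorProduct.map ρ LinearMap.id (ρ w)))
        = (TensorProduct.assoc k C C C)
            (TensorProduct.map (TensorProduct.map W.subtype LinearMap.id) LinearMap.id
              (TensorProduct.map ρ LinearMap.id (ρ w))) := by
      have := TensorProduct.map_map_assoc W.subtype (LinearMap.id : C →ₗ[k] C)
        (LinearMap.id : C →ₗ[k] C) (TensorProduct.map ρ LinearMap.id (ρ w))
      simpa [TensorProduct.map_id] using this
    have lhs₂ : TensorProduct.map (TensorProduct.map W.subtype LinearMap.id) LinearMap.id ∘ₗ
          TensorProduct.map ρ (LinearMap.id : C →ₗ[k] C)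
        = TensorProduct.map ((Coalgebra.comul : C →ₗ[k] C ⊗[k] C) ∘ₗ W.subtype)
            LinearMap.id := by
      apply TensorProduct.ext'
      intro v cc
      simp only [LinearMap.comp_apply, TensorProduct.map_tmul, LinearMap.id_coe, id_eq]
      rw [← hJ, hJρ]
      rfl
    have rhs₁ : TensorProduct.map W.subtype (LinearMap.id : C ⊗[k] C →ₗ[k] C ⊗[k] C) ∘ₗ
          TensorProduct.map LinearMap.id (Coalgebra.comul : C →ₗ[k] C ⊗[k] C)
        = TensorProduct.map LinearMap.id (Coalgebra.comul : C →ₗ[k] C ⊗[k] C) ∘ₗ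
          TensorProduct.map W.subtype (LinearMap.id : C →ₗ[k] C) := by
      apply TensorProduct.ext'
      intro v cc
      simp
    have lhs₂' := LinearMap.congr_fun lhs₂ (ρ w)
    have rhs₁' := LinearMap.congr_fun rhs₁ (ρ w)
    simp only [LinearMap.comp_apply] at lhs₂' rhs₁'
    simp only [LinearMap.comp_apply, LinearEquiv.coe_coe]
    rw [lhs₁, lhs₂', rhs₁', ← hJ, hJρ]
    have hsplit2 : TensorProduct.map ((Coalgebra.comul : C →ₗ[k] C ⊗[k] C) ∘ₗ W.subtype)
          (LinearMap.id : C →ₗ[k] C)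
        = TensorProduct.map (Coalgebra.comul : C →ₗ[k] C ⊗[k] C) LinearMap.id ∘ₗ
          TensorProduct.map W.subtype (LinearMap.id : C →ₗ[k] C) := by
      apply TensorProduct.ext'; intro v cc; simp
    rw [hsplit2, LinearMap.comp_apply, ← hJ, hJρ]
    exact Coalgebra.coassoc_apply (w : C)
  have hcounit : (TensorProduct.map LinearMap.id Coalgebra.counit) ∘ₗ ρ
      = (TensorProduct.rid k W).symm.toLinearMap := by
    have hJ1inj : Function.Injective
        (TensorProduct.map W.subtype (LinearMap.id : k →ₗ[k] k)) :=
      Module.Flat.rTensor_preserves_injective_linearMap (M := k)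
        W.subtype W.injective_subtype
    apply LinearMap.ext
    intro w
    apply hJ1inj
    have h1 : TensorProduct.map W.subtype (LinearMap.id : k →ₗ[k] k) ∘ₗ
          TensorProduct.map LinearMap.id (Coalgebra.counit : C →ₗ[k] k)
        = TensorProduct.map LinearMap.id (Coalgebra.counit : C →ₗ[k] k) ∘ₗ J := by
      rw [hJ]
      apply TensorProduct.ext'; intro v cc; simp
    have h1' := LinearMap.congr_fun h1 (ρ w)
    simp only [LinearMap.comp_apply] at h1'
    simp only [LinearMap.comp_apply, LinearEquiv.coe_coe]
    rw [h1', hJρ]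
    have h2 := Coalgebra.lTensor_counit_comul (R := k) (w : C)
    have h3 : TensorProduct.map (LinearMap.id : C →ₗ[k] C) Coalgebra.counit
        = (Coalgebra.counit (R := k) (A := C)).lTensor C := rfl
    rw [h3, h2]
    simp [TensorProduct.rid_symm_apply]
  refine ⟨{ carrier := W, ρ := ρ, coassoc := hcoassoc, counit := hcounit },
    ((Coalgebra.counit : C →ₗ[k] k) ∘ₗ W.subtype).smulRight (⟨c, hcW⟩ : W), ?_⟩
  rw [canI_smulRight]
  show (TensorProduct.lid k C)
      (TensorProduct.map ((Coalgebra.counit : C →ₗ[k] k) ∘ₗ W.subtype) LinearMap.id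
        (ρ ⟨c, hcW⟩)) = c
  have hsplit : TensorProduct.map ((Coalgebra.counit : C →ₗ[k] k) ∘ₗ W.subtype)
        (LinearMap.id : C →ₗ[k] C)
      = (TensorProduct.map (Coalgebra.counit : C →ₗ[k] k) LinearMap.id) ∘ₗ J := by
    rw [hJ]
    apply TensorProduct.ext'; intro v cc; simp
  rw [hsplit, LinearMap.comp_apply, hJρ]
  have h4 : TensorProduct.map (Coalgebra.counit : C →ₗ[k] k) (LinearMap.id : C →ₗ[k] C)
      = (Coalgebra.counit (R := k) (A := C)).rTensor C := rfl
  rw [h4, Coalgebra.rTensor_counit_comul]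
  simp

end CoendAux

/-- The coalgebra structure induced on `C` as a realization of `Coend(T)` is
exactly the original coalgebra structure `(Δ, ε)` of `C`. -/
theorem induced_coalgebra_structure_eq :
    (∀ X : FdComod k C,
        Coalgebra.comul ∘ₗ canI k C X
          = (TensorProduct.map (canI k C X) (canI k C X)) ∘ₗ comatrixComul k X.carrier) ∧
    (∀ X : FdComod k C,
        (Coalgebra.counit : C →ₗ[k] k) ∘ₗ canI k C X = LinearMap.trace k X.carrier) ∧
    (∀ Δc : C →ₗ[k] C ⊗[k] C,
        (∀ X : FdComod k C,
          Δc ∘ₗ canI k C X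
            = (TensorProduct.map (canI k C X) (canI k C X)) ∘ₗ comatrixComul k X.carrier) →
        Δc = Coalgebra.comul) ∧
    (∀ εc : C →ₗ[k] k,
        (∀ X : FdComod k C, εc ∘ₗ canI k C X = LinearMap.trace k X.carrier) →
        εc = Coalgebra.counit) := by
  refine ⟨CoendAux.part1, CoendAux.part2, ?_, ?_⟩
  · intro Δc hΔc
    apply LinearMap.ext
    intro c
    obtain ⟨X, f, hf⟩ := CoendAux.exists_rep (k := k) (C := C) c
    have h1 := LinearMap.congr_fun (hΔc X) f
    have h2 := LinearMap.congr_fun (CoendAux.part1 (k := k) X) f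
    simp only [LinearMap.comp_apply] at h1 h2
    rw [← hf, h1, ← h2]
  · intro εc hεc
    apply LinearMap.ext
    intro c
    obtain ⟨X, f, hf⟩ := CoendAux.exists_rep (k := k) (C := C) c
    have h1 := LinearMap.congr_fun (hεc X) f
    have h2 := LinearMap.congr_fun (CoendAux.part2 (k := k) X) f
    simp only [LinearMap.comp_apply] at h1 h2
    rw [← hf, h1, ← h2]
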